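/- Suppose G is a finite graph on vertex set V with vertex cover number τ. Then for every integer m, the number of vertex covers of G having exactly m vertices is at most 2^τ · C(|V| − τ, m − τ), where C(a,b) denotes the binomial coefficient. -/

import Mathlib

/-- A vertex cover of a graph: a set of vertices meeting every edge. -/
def IsVertexCover {V : Type*} (G : SimpleGraph V) (C : Set V) : Prop :=
  ∀ ⦃x y : V⦄, G.Adj x y → x ∈ C ∨ y ∈ C

/-- The vertex cover number of a graph: the size of a smallest vertex cover. -/
noncomputable def vertexCoverNumber {V : Type*} (G : SimpleGraph V) : ℕ :=
  sInf {m | ∃ C : Finset V, C.card = m ∧ IsVertexCover G ↑C}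

private lemma choose_shift (p q d : ℕ) : p.choose q ≤ (p + d).choose (q + d) := by
  induction d with
  | zero => simp
  | succ d ih =>
    calc p.choose q ≤ (p + d).choose (q + d) := ih
      _ ≤ (p + d + 1).choose (q + d + 1) := by
          rw [Nat.choose_succ_succ]; exact Nat.le_add_right _ _

/-- If `G` is a finite graph with vertex cover number `τ`, then for
every integer `m` the number of vertex covers of `G` with exactly `m` vertices is at most
`2^τ · C(|V| − τ, m − τ)`. -/
theorem count_vertex_covers_le {V : Type*} [Fintype V] (G : SimpleGraph V) (τ m : ℕ)
    (hτ : vertexCoverNumber G = τ) :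
    {C : Finset V | C.card = m ∧ IsVertexCover G ↑C}.ncard ≤
      2 ^ τ * (Fintype.card V - τ).choose (m - τ) := by
  classical
  set n := Fintype.card V with hn
  -- extract a minimum vertex cover C₀ of size τ
  have hne : {k | ∃ C : Finset V, C.card = k ∧ IsVertexCover G ↑C}.Nonempty :=
    ⟨n, Finset.univ, by simp [hn], fun x y _ => Or.inl (by simp)⟩
  have hmem := Nat.sInf_mem hne
  rw [show sInf {k | ∃ C : Finset V, C.card = k ∧ IsVertexCover G ↑C}
      = vertexCoverNumber G from rfl, hτ] at hmem
  obtain ⟨C₀, hC₀card, hC₀⟩ := hmem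
  have hmin : ∀ C : Finset V, IsVertexCover G ↑C → τ ≤ C.card := by
    intro C hC
    have := Nat.sInf_le (s := {k | ∃ C : Finset V, C.card = k ∧ IsVertexCover G ↑C})
      ⟨C, rfl, hC⟩
    rwa [show sInf {k | ∃ C : Finset V, C.card = k ∧ IsVertexCover G ↑C}
      = vertexCoverNumber G from rfl, hτ] at this
  -- rewrite the set as a finset
  have hset : {C : Finset V | C.card = m ∧ IsVertexCover G ↑C} =
      ↑(Finset.univ.filter fun C : Finset V => C.card = m ∧ IsVertexCover G ↑C) := by
    ext C; simp
  rw [hset, Set.ncard_coe_finset]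
  set T := Finset.univ.filter fun C : Finset V => C.card = m ∧ IsVertexCover G ↑C with hT
  have hTmem : ∀ C : Finset V, C ∈ T ↔ C.card = m ∧ IsVertexCover G ↑C := by
    intro C; simp [hT]
  -- fiberwise counting over A = C ∩ C₀
  have hfib := Finset.card_eq_sum_card_fiberwise (f := fun C : Finset V => C ∩ C₀)
    (s := T) (t := C₀.powerset)
    (fun C _ => Finset.mem_powerset.2 Finset.inter_subset_right)
  rw [hfib]
  have hfiber : ∀ A ∈ C₀.powerset,
      (T.filter fun C => C ∩ C₀ = A).card ≤ (n - τ).choose (m - τ) := by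
    intro A hA
    rw [Finset.mem_powerset] at hA
    by_cases hF : (T.filter fun C => C ∩ C₀ = A).Nonempty
    · obtain ⟨C', hC'⟩ := hF
      rw [Finset.mem_filter] at hC'
      obtain ⟨hC'T, hC'A⟩ := hC'
      rw [hTmem] at hC'T
      obtain ⟨hC'm, hC'cov⟩ := hC'T
      -- the forced outside-neighbours of C₀ \ A
      set S := Finset.univ.filter
        (fun v : V => v ∉ C₀ ∧ ∃ u ∈ C₀, u ∉ A ∧ G.Adj u v) with hS
      have hSmem : ∀ v : V, v ∈ S ↔ v ∉ C₀ ∧ ∃ u ∈ C₀, u ∉ A ∧ G.Adj u v := by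
        intro v; simp [hS]
      have hSdisj : Disjoint S C₀ := by
        rw [Finset.disjoint_left]; intro v hv; exact ((hSmem v).1 hv).1
      have hAdisj : Disjoint A S := by
        rw [Finset.disjoint_right]; intro v hv hvA
        exact ((hSmem v).1 hv).1 (hA hvA)
      -- A ∪ S is a vertex cover, hence τ ≤ |A| + |S|
      have hcov : IsVertexCover G ↑(A ∪ S) := by
        have key : ∀ x y : V, G.Adj x y → x ∈ C₀ → x ∈ A ∪ S ∨ y ∈ A ∪ S := by
          intro x y hxy hxC₀
          by_cases hxA : x ∈ A
          · exact Or.inl (Finset.mem_union_left _ hxA)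
          · have hxC' : x ∉ C' := by
              intro hx
              exact hxA (by rw [← hC'A]; exact Finset.mem_inter.2 ⟨hx, hxC₀⟩)
            have hyC' : y ∈ C' := by
              rcases hC'cov hxy with h | h
              · exact absurd h hxC'
              · exact h
            by_cases hyC₀ : y ∈ C₀
            · exact Or.inr (Finset.mem_union_left _
                (by rw [← hC'A]; exact Finset.mem_inter.2 ⟨hyC', hyC₀⟩))
            · exact Or.inr (Finset.mem_union_right _
                ((hSmem y).2 ⟨hyC₀, x, hxC₀, hxA, hxy⟩))
        intro x y hxy
        rcases hC₀ hxy with h | h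
        · exact key x y hxy h
        · rcases key y x hxy.symm h with h' | h'
          · exact Or.inr h'
          · exact Or.inl h'
      have hτle : τ ≤ A.card + S.card := by
        have := hmin (A ∪ S) hcov
        rwa [Finset.card_union_of_disjoint hAdisj] at this
      have hkτ : A.card ≤ τ := hC₀card ▸ Finset.card_le_card hA
      -- card of C₀ ∪ S
      have hCS : (C₀ ∪ S).card = τ + S.card := by
        rw [Finset.card_union_of_disjoint hSdisj.symm, hC₀card]
      have hCSn : τ + S.card ≤ n := by
        rw [← hCS, hn]; exact Finset.card_le_univ _
      -- injection from the fiber into small subsets of (C₀ ∪ S)ᶜ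
      have hinj : (T.filter fun C => C ∩ C₀ = A).card ≤
          ((C₀ ∪ S)ᶜ.powersetCard (m - (A.card + S.card))).card := by
        apply Finset.card_le_card_of_injOn (fun C => C \ (C₀ ∪ S))
        · intro C hC
          rw [Finset.mem_coe, Finset.mem_filter, hTmem] at hC
          obtain ⟨⟨hCm, hCcov⟩, hCA⟩ := hC
          have hASC : A ∪ S ⊆ C := by
            intro v hv
            rcases Finset.mem_union.1 hv with hv | hv
            · exact Finset.mem_inter.1 (hCA ▸ hv) |>.1
            · obtain ⟨hvC₀, u, huC₀, huA, hadj⟩ := (hSmem v).1 hv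
              have huC : u ∉ C := by
                intro hu
                exact huA (by rw [← hCA]; exact Finset.mem_inter.2 ⟨hu, huC₀⟩)
              rcases hCcov hadj with h | h
              · exact absurd h huC
              · exact h
          have hint : C ∩ (C₀ ∪ S) = A ∪ S := by
            apply Finset.Subset.antisymm
            · intro v hv
              obtain ⟨hvC, hv'⟩ := Finset.mem_inter.1 hv
              rcases Finset.mem_union.1 hv' with h | h
              · exact Finset.mem_union_left _
                  (by rw [← hCA]; exact Finset.mem_inter.2 ⟨hvC, h⟩)
              · exact Finset.mem_union_right _ h
            · intro v hv
              refine Finset.mem_inter.2 ⟨hASC hv, ?_⟩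
              rcases Finset.mem_union.1 hv with h | h
              · exact Finset.mem_union_left _ (hA h)
              · exact Finset.mem_union_right _ h
          have hcard : (A ∪ S).card + (C \ (C₀ ∪ S)).card = m := by
            rw [← hint, Finset.card_inter_add_card_sdiff, hCm]
          rw [Finset.mem_coe, Finset.mem_powersetCard]
          constructor
          · intro v hv
            rw [Finset.mem_compl]
            exact (Finset.mem_sdiff.1 hv).2
          · rw [Finset.card_union_of_disjoint hAdisj] at hcard
            beta_reduce
            omega
        · intro C hC D hD hCD
          rw [Finset.coe_filter] at hC hD
          simp only [Set.mem_setOf_eq, hTmem] at hC hD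
          obtain ⟨⟨hCm, hCcov⟩, hCA⟩ := hC
          obtain ⟨⟨hDm, hDcov⟩, hDA⟩ := hD
          have key : ∀ (E : Finset V), E.card = m → IsVertexCover G ↑E → E ∩ C₀ = A →
              E = (A ∪ S) ∪ (E \ (C₀ ∪ S)) := by
            intro E hEm hEcov hEA
            have hASE : A ∪ S ⊆ E := by
              intro v hv
              rcases Finset.mem_union.1 hv with hv | hv
              · exact Finset.mem_inter.1 (hEA ▸ hv) |>.1
              · obtain ⟨hvC₀, u, huC₀, huA, hadj⟩ := (hSmem v).1 hv
                have huE : u ∉ E := by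
                  intro hu
                  exact huA (by rw [← hEA]; exact Finset.mem_inter.2 ⟨hu, huC₀⟩)
                rcases hEcov hadj with h | h
                · exact absurd h huE
                · exact h
            ext v
            constructor
            · intro hv
              by_cases hv' : v ∈ C₀ ∪ S
              · rcases Finset.mem_union.1 hv' with h | h
                · exact Finset.mem_union_left _ (Finset.mem_union_left _
                    (by rw [← hEA]; exact Finset.mem_inter.2 ⟨hv, h⟩))
                · exact Finset.mem_union_left _ (Finset.mem_union_right _ h)
              · exact Finset.mem_union_right _ (Finset.mem_sdiff.2 ⟨hv, hv'⟩)
            · intro hv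
              rcases Finset.mem_union.1 hv with h | h
              · exact hASE h
              · exact (Finset.mem_sdiff.1 h).1
          have hCD' : C \ (C₀ ∪ S) = D \ (C₀ ∪ S) := hCD
          rw [key C hCm hCcov hCA, key D hDm hDcov hDA, hCD']
      refine hinj.trans ?_
      rw [Finset.card_powersetCard, Finset.card_compl, hCS, ← hn]
      -- arithmetic: choose (n - (τ + t)) (m - (k + t)) ≤ choose (n - τ) (m - τ)
      set k := A.card
      set t := S.card
      by_cases hmkt : k + t ≤ m
      · have h1 := choose_shift (n - (τ + t)) (m - (k + t)) (k + t - τ)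
        have e1 : m - (k + t) + (k + t - τ) = m - τ := by omega
        have e2 : n - (τ + t) + (k + t - τ) ≤ n - τ := by omega
        rw [e1] at h1
        exact h1.trans (Nat.choose_le_choose _ e2)
      ·
        -- but m < k + t forces m - (k+t) = 0, and choose _ 0 = 1 ≤ RHS? Not nec.
        -- Instead: derive contradiction from C' being in fiber.
        exfalso
        -- C' has card m, contains A ∪ S
        have hASC' : A ∪ S ⊆ C' := by
          intro v hv
          rcases Finset.mem_union.1 hv with hv | hv
          · exact Finset.mem_inter.1 (hC'A ▸ hv) |>.1
          · obtain ⟨hvC₀, u, huC₀, huA, hadj⟩ := (hSmem v).1 hv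
            have huC : u ∉ C' := by
              intro hu
              exact huA (by rw [← hC'A]; exact Finset.mem_inter.2 ⟨hu, huC₀⟩)
            rcases hC'cov hadj with h | h
            · exact absurd h huC
            · exact h
        have := Finset.card_le_card hASC'
        rw [Finset.card_union_of_disjoint hAdisj, hC'm] at this
        omega
    · rw [Finset.not_nonempty_iff_eq_empty] at hF
      simp [hF]
  calc ∑ A ∈ C₀.powerset, (T.filter fun C => C ∩ C₀ = A).card
      ≤ ∑ _A ∈ C₀.powerset, (n - τ).choose (m - τ) := Finset.sum_le_sum hfiber
    _ = 2 ^ τ * (n - τ).choose (m - τ) := by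
        rw [Finset.sum_const, Finset.card_powerset, hC₀card, smul_eq_mul]
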